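/- Let c be a codeword of the Grassmann code C(ℓ,m) and let Y = supp(c) ⊆ G(ℓ,m). Then every line of the Grassmannian meets Y in exactly 0 or exactly q points. -/

import Mathlib

open Finset Module

/-- The row space of an `ℓ × m` matrix. -/
def rowSpan (F : Type*) [Field F] {l m : ℕ} (M : Matrix (Fin l) (Fin m) F) :
    Submodule F (Fin m → F) :=
  Submodule.span F (Set.range fun i : Fin l => M i)

/-- The Plücker coordinate of an `ℓ × m` matrix at an `ℓ`-subset `I` of the columns:
the `ℓ × ℓ` minor on the columns of `I` (taken in increasing order). -/
def plucker (F : Type*) [Field F] {l m : ℕ} (M : Matrix (Fin l) (Fin m) F)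
    (I : {s : Finset (Fin m) // s.card = l}) : F :=
  (M.submatrix id fun j : Fin l => ((I.1.orderIsoOfFin I.2 j : Fin m))).det

/-- A line of the Grassmannian `G(ℓ, m)` over `F`: the set of `ℓ`-dimensional subspaces `W`
with `Z ≤ W ≤ Z'` for some nested subspaces `Z` of dimension `ℓ-1` and `Z'` of dimension
`ℓ+1`. -/
def IsGrLine (F : Type*) [Field F] (l m : ℕ) (L : Set (Submodule F (Fin m → F))) : Prop :=
  ∃ Z Z' : Submodule F (Fin m → F), finrank F Z = l - 1 ∧ finrank F Z' = l + 1 ∧ Z ≤ Z' ∧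
    L = {W : Submodule F (Fin m → F) | finrank F W = l ∧ Z ≤ W ∧ W ≤ Z'}

/-- The support of the codeword of the Grassmann code `C(ℓ,m)` given by the coefficient
vector `a` of a linear combination of Plücker coordinates, where `M` assigns to each
subspace a representative matrix: the set of `ℓ`-dimensional subspaces where the
evaluation is nonzero. -/
def grSupport (F : Type*) [Field F] {l m : ℕ}
    (M : Submodule F (Fin m → F) → Matrix (Fin l) (Fin m) F)
    (a : {s : Finset (Fin m) // s.card = l} → F) : Set (Submodule F (Fin m → F)) :=
  {W | finrank F W = l ∧ ∑ I : {s : Finset (Fin m) // s.card = l}, a I * plucker F (M W) I ≠ 0}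

section Aux
variable {F : Type*} [Field F] {m k : ℕ}

lemma plucker_mul {l : ℕ} (C : Matrix (Fin l) (Fin l) F) (N : Matrix (Fin l) (Fin m) F)
    (I : {s : Finset (Fin m) // s.card = l}) :
    plucker F (C * N) I = C.det * plucker F N I := by
  unfold plucker
  rw [show (C * N).submatrix id (fun j : Fin l => ((I.1.orderIsoOfFin I.2 j : Fin m)))
      = C * (N.submatrix id fun j : Fin l => ((I.1.orderIsoOfFin I.2 j : Fin m))) from ?_,
    Matrix.det_mul]
  ext i j
  simp [Matrix.mul_apply]

lemma exists_factor {l : ℕ} (P Q : Matrix (Fin l) (Fin m) F)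
    (h : ∀ i, Q i ∈ rowSpan F P) : ∃ C : Matrix (Fin l) (Fin l) F, Q = C * P := by
  choose c hc using fun i => (Submodule.mem_span_range_iff_exists_fun F).mp (h i)
  refine ⟨Matrix.of c, ?_⟩
  ext i j
  rw [Matrix.mul_apply]
  have := congrFun (hc i) j
  simpa [Finset.sum_apply] using this.symm

lemma rows_linearIndependent {l : ℕ} (Q : Matrix (Fin l) (Fin m) F)
    (hr : finrank F (rowSpan F Q) = l) : LinearIndependent F (fun i => Q i) :=
  linearIndependent_iff_card_eq_finrank_span.mpr (by simp only [Set.finrank, Fintype.card_fin]; exact hr.symm)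

lemma plucker_proportional {l : ℕ} (P Q : Matrix (Fin l) (Fin m) F)
    (h : rowSpan F P = rowSpan F Q) (hr : finrank F (rowSpan F Q) = l) :
    ∃ c : F, c ≠ 0 ∧ ∀ I, plucker F Q I = c * plucker F P I := by
  have hQmem : ∀ i, Q i ∈ rowSpan F Q := fun i =>
    Submodule.subset_span (Set.mem_range_self i)
  have hPmem : ∀ i, P i ∈ rowSpan F P := fun i =>
    Submodule.subset_span (Set.mem_range_self i)
  obtain ⟨C, hC⟩ := exists_factor P Q (fun i => h ▸ hQmem i)
  obtain ⟨D, hD⟩ := exists_factor Q P (fun i => h ▸ hPmem i)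
  have hQind := rows_linearIndependent Q hr
  have hCD : C * D = 1 := by
    have hQQ : (C * D) * Q = Q := by rw [Matrix.mul_assoc, ← hD, ← hC]
    ext i j
    have h0 : ∑ j, ((C * D) i j - (1 : Matrix (Fin l) (Fin l) F) i j) • Q j = 0 := by
      have h1 : ∑ j, (C * D) i j • Q j = Q i := by
        funext kk
        have := congrFun (congrFun hQQ i) kk
        rw [Matrix.mul_apply] at this
        simpa [Finset.sum_apply] using this
      have h2 : ∑ j, (1 : Matrix (Fin l) (Fin l) F) i j • Q j = Q i := by
        rw [Finset.sum_eq_single i (fun b _ hb => by simp [Matrix.one_apply, Ne.symm hb]) (by simp)]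
        simp
      simp only [sub_smul, Finset.sum_sub_distrib, h1, h2, sub_self]
    have := Fintype.linearIndependent_iff.mp hQind _ h0 j
    exact sub_eq_zero.mp this
  have hdet : C.det * D.det = 1 := by
    rw [← Matrix.det_mul, hCD, Matrix.det_one]
  exact ⟨C.det, left_ne_zero_of_mul_eq_one hdet, fun I => by rw [hC, plucker_mul]⟩

lemma range_snoc' {α : Type*} (z : Fin k → α) (v : α) :
    Set.range (Fin.snoc z v : Fin (k+1) → α) = insert v (Set.range z) := by
  ext x
  simp only [Set.mem_range, Set.mem_insert_iff]
  constructor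
  · rintro ⟨i, rfl⟩
    refine Fin.lastCases ?_ ?_ i
    · left; simp
    · intro i; right; exact ⟨i, by simp⟩
  · rintro (rfl | ⟨i, rfl⟩)
    exacts [⟨Fin.last k, by simp⟩, ⟨i.castSucc, by simp⟩]

lemma plucker_snoc (z : Fin k → (Fin m → F)) (v : Fin m → F)
    (I : {s : Finset (Fin m) // s.card = k+1}) :
    plucker F (Matrix.of (Fin.snoc z v)) I =
      Matrix.detRowAlternating (Fin.snoc
        (fun i : Fin k => fun j : Fin (k+1) => z i (I.1.orderIsoOfFin I.2 j))
        (fun j : Fin (k+1) => v (I.1.orderIsoOfFin I.2 j))) := by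
  show Matrix.detRowAlternating _ = _
  congr 1
  funext i j
  refine Fin.lastCases ?_ ?_ i
  · simp [Matrix.submatrix_apply]
  · intro i; simp [Matrix.submatrix_apply]

lemma sum_plucker_snoc_add (a : {s : Finset (Fin m) // s.card = k+1} → F)
    (z : Fin k → (Fin m → F)) (u w : Fin m → F) :
    ∑ I, a I * plucker F (Matrix.of (Fin.snoc z (u + w))) I =
      (∑ I, a I * plucker F (Matrix.of (Fin.snoc z u)) I) +
        ∑ I, a I * plucker F (Matrix.of (Fin.snoc z w)) I := by
  rw [← Finset.sum_add_distrib]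
  refine Finset.sum_congr rfl fun I _ => ?_
  simp only [plucker_snoc]
  rw [← mul_add]
  congr 1
  have : (fun j : Fin (k+1) => (u + w) (I.1.orderIsoOfFin I.2 j)) =
      (fun j : Fin (k+1) => u (I.1.orderIsoOfFin I.2 j)) +
        fun j : Fin (k+1) => w (I.1.orderIsoOfFin I.2 j) := rfl
  rw [this]
  exact Matrix.detRowAlternating.toMultilinearMap.snoc_add _ _ _

lemma sum_plucker_snoc_smul (a : {s : Finset (Fin m) // s.card = k+1} → F)
    (z : Fin k → (Fin m → F)) (c : F) (u : Fin m → F) :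
    ∑ I, a I * plucker F (Matrix.of (Fin.snoc z (c • u))) I =
      c * ∑ I, a I * plucker F (Matrix.of (Fin.snoc z u)) I := by
  rw [Finset.mul_sum]
  refine Finset.sum_congr rfl fun I _ => ?_
  simp only [plucker_snoc]
  have : (fun j : Fin (k+1) => (c • u) (I.1.orderIsoOfFin I.2 j)) =
      c • fun j : Fin (k+1) => u (I.1.orderIsoOfFin I.2 j) := rfl
  have hsm : Matrix.detRowAlternating (Fin.snoc
        (fun i : Fin k => fun j : Fin (k+1) => z i (I.1.orderIsoOfFin I.2 j))
        (c • fun j : Fin (k+1) => u (I.1.orderIsoOfFin I.2 j))) =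
      c • Matrix.detRowAlternating (Fin.snoc
        (fun i : Fin k => fun j : Fin (k+1) => z i (I.1.orderIsoOfFin I.2 j))
        (fun j : Fin (k+1) => u (I.1.orderIsoOfFin I.2 j))) :=
    Matrix.detRowAlternating.toMultilinearMap.snoc_smul _ _ _
  rw [this, hsm, smul_eq_mul]
  ring

lemma finrank_sup_span_singleton {V : Type*} [AddCommGroup V] [Module F V]
    [FiniteDimensional F V] (U : Submodule F V) (v : V) (hv : v ∉ U) :
    finrank F ↥(U ⊔ F ∙ v) = finrank F U + 1 := by
  have hv0 : v ≠ 0 := fun h => hv (h ▸ U.zero_mem)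
  have hinf : U ⊓ (F ∙ v) = ⊥ := by
    rw [eq_bot_iff]
    intro x hx
    obtain ⟨hxU, hxv⟩ := Submodule.mem_inf.mp hx
    obtain ⟨c, rfl⟩ := Submodule.mem_span_singleton.mp hxv
    rcases eq_or_ne c 0 with rfl | hc
    · simp
    · exact absurd (by simpa [smul_smul, inv_mul_cancel₀ hc] using U.smul_mem c⁻¹ hxU) hv
  have h2 := Submodule.finrank_sup_add_finrank_inf_eq U (F ∙ v)
  rw [hinf, finrank_bot, finrank_span_singleton hv0] at h2
  omega

end Aux

/-- every line of the Grassmannian meets the support of a codeword of the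
Grassmann code `C(ℓ,m)` in exactly `0` or exactly `q` points. -/
theorem line_meets_support (F : Type*) [Field F] [Fintype F] {l m : ℕ}
    (hl : 1 ≤ l) (hm : l ≤ m)
    (M : Submodule F (Fin m → F) → Matrix (Fin l) (Fin m) F)
    (hM : ∀ W : Submodule F (Fin m → F), finrank F W = l → rowSpan F (M W) = W)
    (a : {s : Finset (Fin m) // s.card = l} → F)
    (L : Set (Submodule F (Fin m → F))) (hL : IsGrLine F l m L) :
    (grSupport F M a ∩ L).ncard = 0 ∨ (grSupport F M a ∩ L).ncard = Fintype.card F := by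
  obtain ⟨k, rfl⟩ : ∃ k, l = k + 1 := ⟨l - 1, (Nat.succ_pred_eq_of_pos hl).symm⟩
  obtain ⟨Z, Z', hZ, hZ', hZZ', rfl⟩ := hL
  simp only [Nat.add_sub_cancel] at hZ
  -- a basis of Z as rows
  set z : Fin k → (Fin m → F) := fun i => ((Module.finBasisOfFinrankEq F Z hZ) i : Fin m → F)
    with hzdef
  have hz : Submodule.span F (Set.range z) = Z := by
    have h1 : Set.range z = Z.subtype '' Set.range ⇑(Module.finBasisOfFinrankEq F Z hZ) := by
      rw [← Set.range_comp]; rfl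
    rw [h1, ← Submodule.map_span, Basis.span_eq, Submodule.map_subtype_top]
  -- pick e, e'
  have hZltZ' : Z < Z' := Submodule.lt_of_le_of_finrank_lt_finrank hZZ' (by rw [hZ, hZ']; omega)
  obtain ⟨e, heZ', heZ⟩ := SetLike.exists_of_lt hZltZ'
  have hUe : finrank F ↥(Z ⊔ F ∙ e) = k + 1 := by
    rw [finrank_sup_span_singleton Z e heZ, hZ]
  have hUe_le : (Z ⊔ (F ∙ e)) ≤ Z' := sup_le hZZ' ((Submodule.span_singleton_le_iff_mem e Z').mpr heZ')
  have hlt2 : (Z ⊔ (F ∙ e)) < Z' :=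
    Submodule.lt_of_le_of_finrank_lt_finrank hUe_le (by rw [hUe, hZ']; omega)
  obtain ⟨e', he'Z', he'⟩ := SetLike.exists_of_lt hlt2
  have he'Z : e' ∉ Z := fun h => he' (Submodule.mem_sup_left h)
  have key : ∀ α β : F, α • e + β • e' ∈ Z → α = 0 ∧ β = 0 := by
    intro α β h
    have hβ : β = 0 := by
      by_contra hb
      apply he'
      have hrep : e' = β⁻¹ • ((α • e + β • e') - α • e) := by
        rw [add_sub_cancel_left, smul_smul, inv_mul_cancel₀ hb, one_smul]
      rw [hrep]
      exact Submodule.smul_mem _ _ (Submodule.sub_mem _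
        (Submodule.mem_sup_left h)
        (Submodule.mem_sup_right (Submodule.smul_mem _ _ (Submodule.mem_span_singleton_self e))))
    subst hβ
    refine ⟨?_, rfl⟩
    by_contra ha
    apply heZ
    have hrep : e = α⁻¹ • (α • e + (0:F) • e') := by
      rw [zero_smul, add_zero, smul_smul, inv_mul_cancel₀ ha, one_smul]
    rw [hrep]
    exact Z.smul_mem _ h
  have hZ'eq : ((Z ⊔ (F ∙ e)) ⊔ (F ∙ e')) = Z' := by
    apply Submodule.eq_of_le_of_finrank_eq
      (sup_le hUe_le ((Submodule.span_singleton_le_iff_mem e' Z').mpr he'Z'))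
    rw [finrank_sup_span_singleton _ e' he', hUe, hZ']
  -- the parametrization of the line
  set vec : Option F → (Fin m → F) := fun o => Option.elim o e' (fun x => e + x • e') with hvecdef
  set g : Option F → Submodule F (Fin m → F) := fun o => Z ⊔ (F ∙ (vec o)) with hgdef
  have hvecZ' : ∀ o, vec o ∈ Z' := by
    rintro (_ | x)
    · exact he'Z'
    · exact Z'.add_mem heZ' (Z'.smul_mem x he'Z')
  have hvecZ : ∀ o, vec o ∉ Z := by
    rintro (_ | x) h
    · exact he'Z h
    · exact one_ne_zero (key 1 x (by rwa [one_smul])).1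
  have hgdim : ∀ o, finrank F ↥(g o) = k + 1 := fun o => by
    rw [show g o = Z ⊔ (F ∙ (vec o)) from rfl, finrank_sup_span_singleton Z _ (hvecZ o), hZ]
  have hgle : ∀ o, g o ≤ Z' := fun o =>
    sup_le hZZ' ((Submodule.span_singleton_le_iff_mem _ _).mpr (hvecZ' o))
  have hgmem : ∀ o, finrank F ↥(g o) = k + 1 ∧ Z ≤ g o ∧ g o ≤ Z' :=
    fun o => ⟨hgdim o, le_sup_left, hgle o⟩
  have hmemg : ∀ o1 o2, g o1 = g o2 → ∃ c : F, vec o1 - c • vec o2 ∈ Z := by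
    intro o1 o2 h
    have hm1 : vec o1 ∈ g o2 := h ▸ Submodule.mem_sup_right (Submodule.mem_span_singleton_self _)
    obtain ⟨y, hy, w, hw, hywv⟩ := Submodule.mem_sup.mp hm1
    obtain ⟨c, rfl⟩ := Submodule.mem_span_singleton.mp hw
    exact ⟨c, by rw [← hywv]; simpa using hy⟩
  have hginj : Function.Injective g := by
    rintro (_ | x) (_ | y) h
    · rfl
    · exfalso
      obtain ⟨c, hc⟩ := hmemg none (some y) h
      have h2 : (-c) • e + (1 - c * y) • e' ∈ Z := by
        have he : (-c) • e + (1 - c * y) • e' = e' - c • (e + y • e') := by module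
        rwa [he]
      obtain ⟨ha, hb⟩ := key _ _ h2
      rw [neg_eq_zero] at ha
      rw [ha] at hb
      simp at hb
    · exfalso
      obtain ⟨c, hc⟩ := hmemg (some x) none h
      have h2 : (1:F) • e + (x - c) • e' ∈ Z := by
        have he : (1:F) • e + (x - c) • e' = (e + x • e') - c • e' := by module
        rwa [he]
      exact one_ne_zero (key _ _ h2).1
    · obtain ⟨c, hc⟩ := hmemg (some x) (some y) h
      have h2 : (1 - c) • e + (x - c * y) • e' ∈ Z := by
        have he : (1 - c) • e + (x - c * y) • e' = (e + x • e') - c • (e + y • e') := by module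
        rwa [he]
      obtain ⟨ha, hb⟩ := key _ _ h2
      have hc1 : c = 1 := by rw [sub_eq_zero] at ha; exact ha.symm
      rw [hc1, one_mul, sub_eq_zero] at hb
      rw [hb]
  -- swapping lemma
  have hswap0 : ∀ (v w : Fin m → F), w - v ∈ Z → (Z ⊔ (F ∙ w)) ≤ Z ⊔ (F ∙ v) := by
    intro v w hvw
    refine sup_le le_sup_left ((Submodule.span_singleton_le_iff_mem _ _).mpr ?_)
    have hwe : w = (w - v) + v := by ring_nf
    rw [hwe]
    exact Submodule.add_mem _ (Submodule.mem_sup_left hvw)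
      (Submodule.mem_sup_right (Submodule.mem_span_singleton_self v))
  have hswap : ∀ (v w : Fin m → F), w - v ∈ Z → Z ⊔ (F ∙ w) = Z ⊔ (F ∙ v) := fun v w hvw =>
    le_antisymm (hswap0 v w hvw) (hswap0 w v (by simpa [neg_sub] using Z.neg_mem hvw))
  -- surjectivity onto the line
  have hd : ∀ W : Submodule F (Fin m → F), finrank F ↥W = k + 1 → Z ≤ W → W ≤ Z' → ∃ o, g o = W := by
    intro W hWd hZW hWZ'
    have hZltW : Z < W := Submodule.lt_of_le_of_finrank_lt_finrank hZW (by rw [hZ, hWd]; omega)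
    obtain ⟨w, hwW, hwZ⟩ := SetLike.exists_of_lt hZltW
    have hWeq : Z ⊔ (F ∙ w) = W :=
      Submodule.eq_of_le_of_finrank_eq
        (sup_le hZW ((Submodule.span_singleton_le_iff_mem _ _).mpr hwW))
        (by rw [finrank_sup_span_singleton Z w hwZ, hZ, hWd])
    have hwZ' : w ∈ (Z ⊔ (F ∙ e)) ⊔ (F ∙ e') := hZ'eq ▸ hWZ' hwW
    obtain ⟨u, hu, w2, hw2, huw⟩ := Submodule.mem_sup.mp hwZ'
    obtain ⟨v1, hv1, v2, hv2, hv12⟩ := Submodule.mem_sup.mp hu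
    obtain ⟨α, rfl⟩ := Submodule.mem_span_singleton.mp hv2
    obtain ⟨β, rfl⟩ := Submodule.mem_span_singleton.mp hw2
    have hw_eq : w - (α • e + β • e') = v1 := by rw [← huw, ← hv12]; module
    rcases eq_or_ne α 0 with hα | hα
    · rcases eq_or_ne β 0 with hβ | hβ
      · exfalso
        apply hwZ
        have : w = v1 := by rw [← hw_eq, hα, hβ]; module
        rw [this]; exact hv1
      · subst hα
        have hmem : w - β • e' ∈ Z := by
          have h3 : w - β • e' = v1 := by rw [← hw_eq]; module
          rw [h3]; exact hv1
        refine ⟨none, ?_⟩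
        rw [show g none = Z ⊔ (F ∙ e') from rfl, ← hWeq, hswap (β • e') w hmem,
          Submodule.span_singleton_smul_eq (IsUnit.mk0 β hβ)]
    · have hat : α • (e + (α⁻¹ * β) • e') = α • e + β • e' := by
        rw [smul_add, smul_smul, ← mul_assoc, mul_inv_cancel₀ hα, one_mul]
      have hmem : w - α • (e + (α⁻¹ * β) • e') ∈ Z := by
        rw [hat, hw_eq]; exact hv1
      refine ⟨some (α⁻¹ * β), ?_⟩
      rw [show g (some (α⁻¹ * β)) = Z ⊔ (F ∙ (e + (α⁻¹ * β) • e')) from rfl, ← hWeq,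
        hswap _ w hmem, Submodule.span_singleton_smul_eq (IsUnit.mk0 α hα)]
  -- correspondence of nonvanishing
  have hphi : ∀ o, ((∑ I, a I * plucker F (M (g o)) I) ≠ 0 ↔
      (∑ I, a I * plucker F (Matrix.of (Fin.snoc z (vec o))) I) ≠ 0) := by
    intro o
    have hrow : rowSpan F (Matrix.of (Fin.snoc z (vec o))) = g o := by
      show Submodule.span F (Set.range fun i => Matrix.of (Fin.snoc z (vec o)) i) = g o
      rw [show (Set.range fun i => Matrix.of (Fin.snoc z (vec o)) i)
          = insert (vec o) (Set.range z) from range_snoc' z (vec o),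
        Submodule.span_insert, hz]
      exact sup_comm _ _
    have hMrow : rowSpan F (M (g o)) = g o := hM _ (hgdim o)
    obtain ⟨c, hc0, hc⟩ := plucker_proportional (M (g o)) (Matrix.of (Fin.snoc z (vec o)))
      (by rw [hrow, hMrow]) (by rw [hrow]; exact hgdim o)
    have hsum : (∑ I, a I * plucker F (Matrix.of (Fin.snoc z (vec o))) I)
        = c * ∑ I, a I * plucker F (M (g o)) I := by
      rw [Finset.mul_sum]
      refine Finset.sum_congr rfl fun I _ => ?_
      rw [hc I]; ring
    rw [hsum]
    exact ⟨fun h => mul_ne_zero hc0 h, fun h => right_ne_zero_of_mul h⟩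
  -- the set identity
  set S : Set (Option F) :=
    {o | (∑ I, a I * plucker F (Matrix.of (Fin.snoc z (vec o))) I) ≠ 0} with hSdef
  have hset : grSupport F M a ∩ {W : Submodule F (Fin m → F) |
      finrank F ↥W = k + 1 ∧ Z ≤ W ∧ W ≤ Z'} = g '' S := by
    ext W
    simp only [grSupport, Set.mem_inter_iff, Set.mem_setOf_eq, Set.mem_image]
    constructor
    · rintro ⟨⟨hWd, hWs⟩, hW1, hW2, hW3⟩
      obtain ⟨o, rfl⟩ := hd W hW1 hW2 hW3
      exact ⟨o, (hphi o).mp hWs, rfl⟩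
    · rintro ⟨o, ho, rfl⟩
      exact ⟨⟨hgdim o, (hphi o).mpr ho⟩, hgmem o⟩
  rw [hset, Set.ncard_image_of_injective _ hginj]
  -- evaluate on parameters
  set A := ∑ I, a I * plucker F (Matrix.of (Fin.snoc z e)) I with hAdef
  set B := ∑ I, a I * plucker F (Matrix.of (Fin.snoc z e')) I with hBdef
  have hvalB : (∑ I, a I * plucker F (Matrix.of (Fin.snoc z (vec none))) I) = B := rfl
  have hvalA : ∀ x : F,
      (∑ I, a I * plucker F (Matrix.of (Fin.snoc z (vec (some x)))) I) = A + x * B := by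
    intro x
    show (∑ I, a I * plucker F (Matrix.of (Fin.snoc z (e + x • e'))) I) = A + x * B
    rw [sum_plucker_snoc_add, sum_plucker_snoc_smul]
  rcases eq_or_ne B 0 with hB0 | hB0
  · rcases eq_or_ne A 0 with hA0 | hA0
    · left
      have hSe : S = ∅ := by
        ext o
        simp only [hSdef, Set.mem_setOf_eq, Set.mem_empty_iff_false, iff_false, not_not]
        rcases o with _ | x
        · rw [hvalB]; exact hB0
        · rw [hvalA x, hA0, hB0]; ring
      rw [hSe, Set.ncard_empty]
    · right
      have hSe : S = {(none : Option F)}ᶜ := by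
        ext o
        simp only [hSdef, Set.mem_setOf_eq, Set.mem_compl_iff, Set.mem_singleton_iff]
        rcases o with _ | x
        · rw [hvalB]; simp [hB0]
        · rw [hvalA x, hB0]
          simp [hA0]
      rw [hSe]
      have h3 := Set.ncard_add_ncard_compl ({(none : Option F)})
      rw [Set.ncard_singleton, Nat.card_eq_fintype_card, Fintype.card_option] at h3
      omega
  · right
    have hSe : S = {(some (-A / B) : Option F)}ᶜ := by
      ext o
      simp only [hSdef, Set.mem_setOf_eq, Set.mem_compl_iff, Set.mem_singleton_iff]
      rcases o with _ | x
      · rw [hvalB]; simp [hB0]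
      · rw [hvalA x]
        have hiff : A + x * B = 0 ↔ x = -A / B := by
          rw [eq_div_iff hB0, eq_neg_iff_add_eq_zero, add_comm]
        simp only [ne_eq, Option.some.injEq]
        exact not_congr hiff
    rw [hSe]
    have h3 := Set.ncard_add_ncard_compl ({(some (-A / B) : Option F)})
    rw [Set.ncard_singleton, Nat.card_eq_fintype_card, Fintype.card_option] at h3
    omega
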